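/- In the exact category C^q(Free(R)) of bounded acyclic complexes of finitely generated free modules over a ring R with a stably free non-free projective module P (with P ⊕ R^m ≅ R^n), there exists a morphism of acyclic complexes whose components are all admissible epimorphisms of Free(R), but which is not an admissible epimorphism in C^q(Free(R)): its termwise kernel is a complex of free modules that is exact as R-modules but not acyclic in Free(R). -/

import Mathlib

/-- A bounded complex of finitely generated free `R`-modules (presented as
`Fin (r k) → R`) is acyclic *in the exact category `Free(R)`* if its
differentials factor through short exact sequences whose factorization objects
are again finitely generated free modules. -/
def FreeComplexAcyclic (R : Type) [Ring R] (r : ℤ → ℕ)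
    (d : ∀ k : ℤ, (Fin (r k) → R) →ₗ[R] (Fin (r (k - 1)) → R)) : Prop :=
  ∃ (z : ℤ → ℕ) (ι : ∀ k : ℤ, (Fin (z k) → R) →ₗ[R] (Fin (r k) → R))
    (p : ∀ k : ℤ, (Fin (r k) → R) →ₗ[R] (Fin (z (k - 1)) → R)),
    (∀ k, Function.Injective (ι k)) ∧ (∀ k, Function.Surjective (p k)) ∧
    (∀ k, LinearMap.range (ι k) = LinearMap.ker (p k)) ∧
    (∀ k, d k = (ι (k - 1)).comp (p k))


set_option linter.unusedSectionVars false

namespace HarrisEx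

variable {R : Type} [Ring R] {P : Type} [AddCommGroup P] [Module R P] {m n : ℕ}

/-- rank function of the kernel complex K -/
def rk (m n : ℕ) (k : ℤ) : ℕ :=
  if k = 0 then m else if k = 1 then n else if k = 2 then n else if k = 3 then m else 0

/-- rank function of the target complex N -/
def rn (m : ℕ) (k : ℤ) : ℕ := if k = 1 then m else if k = 2 then m else 0

/-- rank function of M = K ⊕ N -/
def rm (m n : ℕ) (k : ℤ) : ℕ := rk m n k + rn m k

def zm (m n : ℕ) (k : ℤ) : ℕ := if k = 0 then m else if k = 1 then n else if k = 2 then m else 0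

def zn (m : ℕ) (k : ℤ) : ℕ := if k = 1 then m else 0

variable (e : (P × (Fin m → R)) ≃ₗ[R] (Fin n → R))

noncomputable def prP : (Fin n → R) →ₗ[R] P :=
  (LinearMap.fst R P (Fin m → R)).comp e.symm.toLinearMap
noncomputable def prF : (Fin n → R) →ₗ[R] (Fin m → R) :=
  (LinearMap.snd R P (Fin m → R)).comp e.symm.toLinearMap
noncomputable def jP : P →ₗ[R] (Fin n → R) :=
  e.toLinearMap.comp (LinearMap.inl R P (Fin m → R))
noncomputable def jF : (Fin m → R) →ₗ[R] (Fin n → R) :=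
  e.toLinearMap.comp (LinearMap.inr R P (Fin m → R))

@[simp] lemma prP_jP (x : P) : prP e (jP e x) = x := by simp [prP, jP]
@[simp] lemma prP_jF (y : Fin m → R) : prP e (jF e y) = 0 := by simp [prP, jF]
@[simp] lemma prF_jP (x : P) : prF e (jP e x) = 0 := by simp [prF, jP]
@[simp] lemma prF_jF (y : Fin m → R) : prF e (jF e y) = y := by simp [prF, jF]

lemma decomp (v : Fin n → R) : jP e (prP e v) + jF e (prF e v) = v := by
  simp only [prP, jP, prF, jF, LinearMap.comp_apply, LinearEquiv.coe_coe,
    LinearMap.fst_apply, LinearMap.snd_apply, LinearMap.inl_apply, LinearMap.inr_apply]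
  rw [← map_add]
  simp

lemma jP_inj : Function.Injective (jP e) := fun x y h => by
  simpa using congrArg (prP e) h
lemma jF_inj : Function.Injective (jF e) := fun x y h => by
  simpa using congrArg (prF e) h
lemma prP_surj : Function.Surjective (prP e) := fun x => ⟨jP e x, by simp⟩
lemma prF_surj : Function.Surjective (prF e) := fun y => ⟨jF e y, by simp⟩

lemma ker_prP : LinearMap.ker (prP e) = LinearMap.range (jF e) := by
  ext v
  simp only [LinearMap.mem_ker, LinearMap.mem_range]
  constructor
  · intro h
    refine ⟨prF e v, ?_⟩
    conv_rhs => rw [← decomp e v]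
    rw [h, map_zero, zero_add]
  · rintro ⟨y, rfl⟩; simp

lemma ker_prF : LinearMap.ker (prF e) = LinearMap.range (jP e) := by
  ext v
  simp only [LinearMap.mem_ker, LinearMap.mem_range]
  constructor
  · intro h
    refine ⟨prP e v, ?_⟩
    conv_rhs => rw [← decomp e v]
    rw [h, map_zero, add_zero]
  · rintro ⟨x, rfl⟩; simp

/- subsingleton helpers -/
lemma subsV {c : ℕ} (h : c = 0) : Subsingleton (Fin c → R) := by subst h; infer_instance

lemma lmE_dom {A B : Type} [AddCommGroup A] [Module R A] [AddCommGroup B] [Module R B]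
    (h : Subsingleton A) (f g : A →ₗ[R] B) : f = g := by
  ext x; rw [Subsingleton.elim x 0, map_zero, map_zero]

lemma lmE_cod {A B : Type} [AddCommGroup A] [Module R A] [AddCommGroup B] [Module R B]
    (h : Subsingleton B) (f g : A →ₗ[R] B) : f = g := by
  ext x; exact Subsingleton.elim _ _

lemma smE {A : Type} [AddCommGroup A] [Module R A] (h : Subsingleton A)
    (S T : Submodule R A) : S = T := by
  ext x; rw [Subsingleton.elim x 0]; simp

lemma surjE {A B : Type} [AddCommGroup A] [Module R A] [AddCommGroup B] [Module R B]
    (h : Subsingleton B) (f : A →ₗ[R] B) : Function.Surjective f :=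
  fun _ => ⟨0, Subsingleton.elim _ _⟩

lemma injE {A B : Type} [AddCommGroup A] [Module R A] [AddCommGroup B] [Module R B]
    (h : Subsingleton A) (f : A →ₗ[R] B) : Function.Injective f :=
  fun _ _ _ => Subsingleton.elim _ _

/- differentials -/
noncomputable def dk : ∀ k : ℤ, (Fin (rk m n k) → R) →ₗ[R] (Fin (rk m n (k-1)) → R) :=
  fun k =>
  if h : k = 1 then by subst h; exact prF e
  else if h : k = 2 then by subst h; exact (jP e).comp (prP e)
  else if h : k = 3 then by subst h; exact jF e
  else 0

lemma dk_one : dk e 1 = prF e := rfl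
lemma dk_two : dk e 2 = (jP e).comp (prP e) := rfl
lemma dk_three : dk e 3 = jF e := rfl
lemma dk_zero {k : ℤ} (h1 : k ≠ 1) (h2 : k ≠ 2) (h3 : k ≠ 3) : dk e k = 0 := by
  rw [dk, dif_neg h1, dif_neg h2, dif_neg h3]

noncomputable def dn (R : Type) [Ring R] (m : ℕ) :
    ∀ k : ℤ, (Fin (rn m k) → R) →ₗ[R] (Fin (rn m (k-1)) → R) := fun k =>
  if h : k = 2 then by subst h; exact LinearMap.id else 0

lemma dn_two : dn R m 2 = LinearMap.id := rfl
lemma dn_zero {k : ℤ} (h2 : k ≠ 2) : dn R m k = 0 := by rw [dn, dif_neg h2]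

/-- the splitting equivalence -/
noncomputable def EE (R : Type) [Ring R] (a b : ℕ) :
    (Fin (a+b) → R) ≃ₗ[R] (Fin a → R) × (Fin b → R) :=
  (LinearEquiv.funCongrLeft R R finSumFinEquiv).trans
    (LinearEquiv.sumArrowLequivProdArrow _ _ R R)

noncomputable def EM (R : Type) [Ring R] (m n : ℕ) (k : ℤ) :
    (Fin (rm m n k) → R) ≃ₗ[R] (Fin (rk m n k) → R) × (Fin (rn m k) → R) :=
  EE R (rk m n k) (rn m k)

noncomputable def dm : ∀ k : ℤ, (Fin (rm m n k) → R) →ₗ[R] (Fin (rm m n (k-1)) → R) :=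
  fun k => (EM R m n (k-1)).symm.toLinearMap.comp
    (((dk e k).prodMap (dn R m k)).comp (EM R m n k).toLinearMap)

noncomputable def phi (R : Type) [Ring R] (m n : ℕ) :
    ∀ k : ℤ, (Fin (rm m n k) → R) →ₗ[R] (Fin (rn m k) → R) :=
  fun k => (LinearMap.snd R _ _).comp (EM R m n k).toLinearMap

noncomputable def iKM (R : Type) [Ring R] (m n : ℕ) :
    ∀ k : ℤ, (Fin (rk m n k) → R) →ₗ[R] (Fin (rm m n k) → R) :=
  fun k => (EM R m n k).symm.toLinearMap.comp (LinearMap.inl R _ _)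


lemma phi_surj (k : ℤ) : Function.Surjective (phi R m n k) :=
  fun y => ⟨(EM R m n k).symm (0, y), by simp [phi]⟩

lemma chain_phi (k : ℤ) :
    (dn R m k).comp (phi R m n k) = (phi R m n (k-1)).comp (dm e k) := by
  ext w
  simp [phi, dm]

lemma iKM_inj (k : ℤ) : Function.Injective (iKM R m n k) := by
  intro x y h
  have := congrArg (EM R m n k) h
  simp only [iKM, LinearMap.comp_apply, LinearEquiv.coe_coe, LinearMap.inl_apply,
    LinearEquiv.apply_symm_apply, Prod.mk.injEq] at this
  exact this.1

lemma range_iKM (k : ℤ) :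
    LinearMap.range (iKM R m n k) = LinearMap.ker (phi R m n k) := by
  ext w
  simp only [iKM, phi, LinearMap.mem_range, LinearMap.mem_ker, LinearMap.comp_apply,
    LinearEquiv.coe_coe, LinearMap.inl_apply, LinearMap.snd_apply]
  constructor
  · rintro ⟨u, rfl⟩
    simp
  · intro hw
    refine ⟨(EM R m n k w).1, ?_⟩
    rw [show ((EM R m n k w).1, (0 : Fin (rn m k) → R)) = EM R m n k w by
      rw [← hw]]
    simp

lemma chain_iKM (k : ℤ) :
    (dm e k).comp (iKM R m n k) = (iKM R m n (k-1)).comp (dk e k) := by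
  ext u
  simp [dm, iKM]


/- zero-rank lemmas -/
lemma rk_zero {k : ℤ} (h0 : k ≠ 0) (h1 : k ≠ 1) (h2 : k ≠ 2) (h3 : k ≠ 3) :
    rk m n k = 0 := by simp [rk, h0, h1, h2, h3]
lemma rn_zero {m : ℕ} {k : ℤ} (h1 : k ≠ 1) (h2 : k ≠ 2) : rn m k = 0 := by
  simp [rn, h1, h2]
lemma rm_zero {k : ℤ} (h0 : k ≠ 0) (h1 : k ≠ 1) (h2 : k ≠ 2) (h3 : k ≠ 3) :
    rm m n k = 0 := by
  simp [rm, rk_zero h0 h1 h2 h3, rn_zero h1 h2]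
lemma zm_zero {k : ℤ} (h0 : k ≠ 0) (h1 : k ≠ 1) (h2 : k ≠ 2) : zm m n k = 0 := by
  simp [zm, h0, h1, h2]
lemma zn_zero {m : ℕ} {k : ℤ} (h1 : k ≠ 1) : zn m k = 0 := by simp [zn, h1]

/- factorization data for M -/
noncomputable def iM : ∀ k : ℤ, (Fin (zm m n k) → R) →ₗ[R] (Fin (rm m n k) → R) :=
  fun k =>
  if h : k = 0 then by
    subst h; exact (EM R m n 0).symm.toLinearMap.comp (LinearMap.inl R _ _)
  else if h : k = 1 then by
    subst h; exact (EM R m n 1).symm.toLinearMap.comp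
      (((jP e).prodMap LinearMap.id).comp e.symm.toLinearMap)
  else if h : k = 2 then by
    subst h; exact (EM R m n 2).symm.toLinearMap.comp ((LinearMap.inl R _ _).comp (jF e))
  else 0

lemma iM_zero :
    iM e 0 = (EM R m n 0).symm.toLinearMap.comp (LinearMap.inl R _ _) := rfl
lemma iM_one :
    iM e 1 = (EM R m n 1).symm.toLinearMap.comp
      (((jP e).prodMap LinearMap.id).comp e.symm.toLinearMap) := rfl
lemma iM_two :
    iM e 2 = (EM R m n 2).symm.toLinearMap.comp ((LinearMap.inl R _ _).comp (jF e)) := rfl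
lemma iM_z {k : ℤ} (h0 : k ≠ 0) (h1 : k ≠ 1) (h2 : k ≠ 2) : iM e k = 0 := by
  rw [iM, dif_neg h0, dif_neg h1, dif_neg h2]

noncomputable def pM : ∀ k : ℤ, (Fin (rm m n k) → R) →ₗ[R] (Fin (zm m n (k-1)) → R) :=
  fun k =>
  if h : k = 1 then by
    subst h; exact (prF e).comp ((LinearMap.fst R _ _).comp (EM R m n 1).toLinearMap)
  else if h : k = 2 then by
    subst h; exact e.toLinearMap.comp
      (((prP e).prodMap LinearMap.id).comp (EM R m n 2).toLinearMap)
  else if h : k = 3 then by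
    subst h; exact (LinearMap.fst R _ _).comp (EM R m n 3).toLinearMap
  else 0

lemma pM_one :
    pM e 1 = (prF e).comp ((LinearMap.fst R _ _).comp (EM R m n 1).toLinearMap) := rfl
lemma pM_two :
    pM e 2 = e.toLinearMap.comp
      (((prP e).prodMap LinearMap.id).comp (EM R m n 2).toLinearMap) := rfl
lemma pM_three :
    pM e 3 = (LinearMap.fst R _ _).comp (EM R m n 3).toLinearMap := rfl
lemma pM_z {k : ℤ} (h1 : k ≠ 1) (h2 : k ≠ 2) (h3 : k ≠ 3) : pM e k = 0 := by
  rw [pM, dif_neg h1, dif_neg h2, dif_neg h3]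

/- factorization data for N -/
noncomputable def iN (R : Type) [Ring R] (m : ℕ) :
    ∀ k : ℤ, (Fin (zn m k) → R) →ₗ[R] (Fin (rn m k) → R) :=
  fun k => if h : k = 1 then by subst h; exact LinearMap.id else 0

lemma iN_one : iN R m 1 = LinearMap.id := rfl
lemma iN_z {k : ℤ} (h1 : k ≠ 1) : iN R m k = 0 := by rw [iN, dif_neg h1]

noncomputable def pN (R : Type) [Ring R] (m : ℕ) :
    ∀ k : ℤ, (Fin (rn m k) → R) →ₗ[R] (Fin (zn m (k-1)) → R) :=
  fun k => if h : k = 2 then by subst h; exact LinearMap.id else 0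

lemma pN_two : pN R m 2 = LinearMap.id := rfl
lemma pN_z {k : ℤ} (h2 : k ≠ 2) : pN R m k = 0 := by rw [pN, dif_neg h2]



/- applied-form simp lemmas -/
@[simp] lemma dk_one_ap (v) : dk e 1 v = prF e v := rfl
@[simp] lemma dk_two_ap (v) : dk e 2 v = jP e (prP e v) := rfl
@[simp] lemma dk_three_ap (v) : dk e 3 v = jF e v := rfl
@[simp] lemma dn_two_ap (v : Fin (rn m 2) → R) : dn R m 2 v = v := rfl
@[simp] lemma iM_zero_ap (u) : iM e 0 u = (EM R m n 0).symm (u, 0) := rfl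
@[simp] lemma iM_one_ap (u) :
    iM e 1 u = (EM R m n 1).symm (jP e (e.symm u).1, (e.symm u).2) := rfl
@[simp] lemma iM_two_ap (u) : iM e 2 u = (EM R m n 2).symm (jF e u, 0) := rfl
@[simp] lemma pM_one_ap (w) : pM e 1 w = prF e ((EM R m n 1 w).1) := rfl
@[simp] lemma pM_two_ap (w) :
    pM e 2 w = e (prP e ((EM R m n 2 w).1), (EM R m n 2 w).2) := rfl
@[simp] lemma pM_three_ap (w) : pM e 3 w = (EM R m n 3 w).1 := rfl
@[simp] lemma iN_one_ap (u : Fin (zn m 1) → R) : iN R m 1 u = u := rfl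
@[simp] lemma pN_two_ap (w : Fin (rn m 2) → R) : pN R m 2 w = w := rfl
lemma dm_ap (k w) : dm e k w =
    (EM R m n (k-1)).symm (dk e k ((EM R m n k w).1), dn R m k ((EM R m n k w).2)) := rfl

/- N acyclicity pieces -/
lemma iN_inj (k : ℤ) : Function.Injective (iN R m k) := by
  by_cases h1 : k = 1
  · subst h1; exact fun a b h => h
  · exact injE (subsV (zn_zero h1)) _

lemma pN_surj (k : ℤ) : Function.Surjective (pN R m k) := by
  by_cases h2 : k = 2
  · subst h2; exact fun y => ⟨y, rfl⟩
  · exact surjE (subsV (zn_zero (by omega : k - 1 ≠ 1))) _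

lemma range_iN (k : ℤ) : LinearMap.range (iN R m k) = LinearMap.ker (pN R m k) := by
  by_cases h1 : k = 1
  · subst h1
    rw [pN_z (by norm_num : (1:ℤ) ≠ 2), LinearMap.ker_zero, LinearMap.range_eq_top]
    exact fun u => ⟨u, rfl⟩
  by_cases h2 : k = 2
  · subst h2
    show LinearMap.range (iN R m 2) = LinearMap.ker (LinearMap.id (R := R) (M := Fin (rn m 2) → R))
    rw [iN_z (by norm_num : (2:ℤ) ≠ 1), LinearMap.range_zero, LinearMap.ker_id]
  · exact smE (subsV (rn_zero h1 h2)) _ _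

lemma dn_fact (k : ℤ) : dn R m k = (iN R m (k-1)).comp (pN R m k) := by
  by_cases h2 : k = 2
  · subst h2
    refine LinearMap.ext fun w => ?_
    show w = iN R m 1 (pN R m 2 w)
    rfl
  · rw [dn_zero h2, pN_z h2, LinearMap.comp_zero]

/- M acyclicity pieces -/
lemma iM_inj (k : ℤ) : Function.Injective (iM e k) := by
  by_cases h0 : k = 0
  · subst h0
    intro x y h
    simp only [iM_zero_ap] at h
    have := (EM R m n 0).symm.injective h
    exact congrArg Prod.fst this
  by_cases h1 : k = 1
  · subst h1
    intro x y h
    simp only [iM_one_ap] at h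
    have h2 := (EM R m n 1).symm.injective h
    replace h2 := Prod.mk.inj h2
    apply e.symm.injective
    exact Prod.ext (jP_inj e h2.1) h2.2
  by_cases h2 : k = 2
  · subst h2
    intro x y h
    simp only [iM_two_ap] at h
    have h3 := (EM R m n 2).symm.injective h
    replace h3 := Prod.mk.inj h3
    exact jF_inj e h3.1
  · exact injE (subsV (zm_zero h0 h1 h2)) _

lemma pM_surj (k : ℤ) : Function.Surjective (pM e k) := by
  by_cases h1 : k = 1
  · subst h1
    intro y
    refine ⟨(EM R m n 1).symm (jF e y, 0), ?_⟩
    show prF e ((EM R m n 1 ((EM R m n 1).symm (jF e y, 0))).1) = y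
    simp
    exact prF_jF e y
  by_cases h2 : k = 2
  · subst h2
    intro y
    refine ⟨(EM R m n 2).symm (jP e (e.symm y).1, (e.symm y).2), ?_⟩
    show e (prP e ((EM R m n 2 ((EM R m n 2).symm (jP e (e.symm y).1, (e.symm y).2))).1),
      (EM R m n 2 ((EM R m n 2).symm (jP e (e.symm y).1, (e.symm y).2))).2) = y
    simp
    exact e.apply_symm_apply y
  by_cases h3 : k = 3
  · subst h3
    intro y
    refine ⟨(EM R m n 3).symm (y, 0), ?_⟩
    show (EM R m n 3 ((EM R m n 3).symm (y, 0))).1 = y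
    simp
    exact rfl
  · exact surjE (subsV (zm_zero (by omega) (by omega) (by omega))) _

lemma range_iM (k : ℤ) : LinearMap.range (iM e k) = LinearMap.ker (pM e k) := by
  by_cases h0 : k = 0
  · subst h0
    rw [pM_z e (by norm_num) (by norm_num) (by norm_num), LinearMap.ker_zero,
      LinearMap.range_eq_top]
    intro w
    haveI := subsV (R := R) (rn_zero (m := m) (by norm_num : (0:ℤ) ≠ 1) (by norm_num))
    refine ⟨(EM R m n 0 w).1, ?_⟩
    have hb : (EM R m n 0 w).2 = (0 : Fin (rn m 0) → R) := Subsingleton.elim _ _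
    have hpair : ((EM R m n 0 w).1, (0 : Fin (rn m 0) → R)) = EM R m n 0 w := by
      rw [← hb]
    show (EM R m n 0).symm ((EM R m n 0 w).1, (0 : Fin (rn m 0) → R)) = w
    rw [hpair]
    simp
  by_cases h1 : k = 1
  · subst h1
    ext w
    simp only [LinearMap.mem_range, LinearMap.mem_ker, iM_one_ap, pM_one_ap]
    constructor
    · rintro ⟨u, rfl⟩
      simp
      exact rfl
    · intro hw
      refine ⟨e (prP e ((EM R m n 1 w).1), (EM R m n 1 w).2), ?_⟩
      have ha : jP e (prP e ((EM R m n 1 w).1)) = (EM R m n 1 w).1 := by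
        conv_rhs => rw [← decomp e ((EM R m n 1 w).1)]
        rw [hw]
        exact (add_zero _).symm.trans
          (congrArg (fun t => jP e (prP e ((EM R m n 1 w).1)) + t) (map_zero (jF e)).symm)
      rw [LinearEquiv.symm_apply_apply, ha, Prod.mk.eta]
      simp
  by_cases h2 : k = 2
  · subst h2
    ext w
    simp only [LinearMap.mem_range, LinearMap.mem_ker, iM_two_ap, pM_two_ap]
    constructor
    · rintro ⟨u, rfl⟩
      simp only [LinearEquiv.apply_symm_apply, prP_jF]
      have h00 : ((prP e (jF e u), (0 : Fin m → R)) : P × (Fin m → R)) = 0 :=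
        Prod.ext (prP_jF e u) rfl
      exact (congrArg e h00).trans (map_zero e)
    · intro hw
      have h0' : (prP e ((EM R m n 2 w).1), (EM R m n 2 w).2) = (0 : P × (Fin m → R)) := by
        apply e.injective; rw [map_zero]; exact hw
      have ha0 : prP e ((EM R m n 2 w).1) = 0 := congrArg Prod.fst h0'
      have hb0 : (EM R m n 2 w).2 = 0 := congrArg Prod.snd h0'
      refine ⟨prF e ((EM R m n 2 w).1), ?_⟩
      have ha : jF e (prF e ((EM R m n 2 w).1)) = (EM R m n 2 w).1 := by
        conv_rhs => rw [← decomp e ((EM R m n 2 w).1)]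
        rw [ha0, map_zero, zero_add]
      have hpair : ((EM R m n 2 w).1, (0 : Fin (rn m 2) → R)) = EM R m n 2 w := by
        rw [← hb0]
      rw [ha, hpair]
      simp
  by_cases h3 : k = 3
  · subst h3
    rw [iM_z e (by norm_num) (by norm_num) (by norm_num), LinearMap.range_zero, eq_comm,
      LinearMap.ker_eq_bot]
    intro x y h
    haveI := subsV (R := R) (rn_zero (m := m) (by norm_num : (3:ℤ) ≠ 1) (by norm_num))
    simp only [pM_three_ap] at h
    exact (EM R m n 3).injective (Prod.ext h (Subsingleton.elim _ _))
  · exact smE (subsV (rm_zero h0 h1 h2 h3)) _ _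

lemma dm_fact (k : ℤ) : dm e k = (iM e (k-1)).comp (pM e k) := by
  by_cases h1 : k = 1
  · subst h1
    refine LinearMap.ext fun w => ?_
    show (EM R m n 0).symm (dk e 1 ((EM R m n 1 w).1), dn R m 1 ((EM R m n 1 w).2))
      = iM e 0 (pM e 1 w)
    rw [dn_zero (by norm_num : (1:ℤ) ≠ 2), LinearMap.zero_apply, dk_one_ap, iM_zero_ap,
      pM_one_ap]
  by_cases h2 : k = 2
  · subst h2
    refine LinearMap.ext fun w => ?_
    show (EM R m n 1).symm (dk e 2 ((EM R m n 2 w).1), dn R m 2 ((EM R m n 2 w).2))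
      = iM e 1 (pM e 2 w)
    rw [dk_two_ap, dn_two_ap, iM_one_ap, pM_two_ap, LinearEquiv.symm_apply_apply]
  by_cases h3 : k = 3
  · subst h3
    refine LinearMap.ext fun w => ?_
    show (EM R m n 2).symm (dk e 3 ((EM R m n 3 w).1), dn R m 3 ((EM R m n 3 w).2))
      = iM e 2 (pM e 3 w)
    rw [dn_zero (by norm_num : (3:ℤ) ≠ 2), LinearMap.zero_apply, dk_three_ap, iM_two_ap,
      pM_three_ap]
  · rw [pM_z e h1 h2 h3, LinearMap.comp_zero]
    refine LinearMap.ext fun w => ?_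
    show (EM R m n (k-1)).symm (dk e k ((EM R m n k w).1), dn R m k ((EM R m n k w).2))
      = 0
    rw [dk_zero e h1 h2 h3, dn_zero h2]
    simp

/- exactness of the kernel complex -/
lemma dk_exact (k : ℤ) :
    LinearMap.range (dk e k) = LinearMap.ker (dk e (k-1)) := by
  by_cases h1 : k = 1
  · subst h1
    show LinearMap.range (prF e) = LinearMap.ker (dk e 0)
    rw [dk_zero e (by norm_num) (by norm_num) (by norm_num), LinearMap.ker_zero]
    exact LinearMap.range_eq_top.mpr (prF_surj e)
  by_cases h2 : k = 2
  · subst h2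
    show LinearMap.range ((jP e).comp (prP e)) = LinearMap.ker (prF e)
    rw [LinearMap.range_comp_of_range_eq_top _ (LinearMap.range_eq_top.mpr (prP_surj e)),
      ker_prF]
  by_cases h3 : k = 3
  · subst h3
    show LinearMap.range (jF e) = LinearMap.ker ((jP e).comp (prP e))
    rw [LinearMap.ker_comp, LinearMap.ker_eq_bot.mpr (jP_inj e)]
    rw [show Submodule.comap (prP e) (⊥ : Submodule R P) = LinearMap.ker (prP e) from rfl,
      ker_prP]
  by_cases h4 : k = 4
  · subst h4
    show LinearMap.range (dk e 4) = LinearMap.ker (jF e)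
    rw [dk_zero e (by norm_num) (by norm_num) (by norm_num), LinearMap.range_zero,
      LinearMap.ker_eq_bot.mpr (jF_inj e)]
    exact rfl
  · rw [dk_zero e h1 h2 h3, dk_zero e (by omega) (by omega) (by omega)]
    exact smE (subsV (rk_zero (by omega) (by omega) (by omega) (by omega))) _ _

/- freeness transfer -/
lemma free_of_range_eq {A : Type} [AddCommGroup A] [Module R A] {c : ℕ}
    (f : P →ₗ[R] A) (hf : Function.Injective f)
    (g : (Fin c → R) →ₗ[R] A) (hg : Function.Injective g)
    (h : LinearMap.range f = LinearMap.range g) : Module.Free R P :=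
  Module.Free.of_equiv ((LinearEquiv.ofInjective g hg).trans
    ((LinearEquiv.ofEq _ _ h.symm).trans (LinearEquiv.ofInjective f hf).symm))

end HarrisEx

open HarrisEx

/-- **Example 1.3 of Harris.** Over a ring `R` with a finitely generated stably
free non-free projective module `P` (with `P ⊕ Rᵐ ≅ Rⁿ`), there is a morphism
of bounded acyclic complexes in `Cᑫ(Free(R))` whose components are all
admissible epimorphisms of `Free(R)`, but which is not an admissible
epimorphism in `Cᑫ(Free(R))`: its termwise kernel is a complex of finitely
generated free modules that is exact as a sequence of `R`-modules but is not
acyclic in `Free(R)`. -/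
theorem stmt5 (R : Type) [Ring R] (P : Type) [AddCommGroup P] [Module R P]
    [Module.Finite R P] [Module.Projective R P] (hnotfree : ¬ Module.Free R P)
    (m n : ℕ) (e : (P × (Fin m → R)) ≃ₗ[R] (Fin n → R)) :
    ∃ (rM rN : ℤ → ℕ)
      (dM : ∀ k : ℤ, (Fin (rM k) → R) →ₗ[R] (Fin (rM (k - 1)) → R))
      (dN : ∀ k : ℤ, (Fin (rN k) → R) →ₗ[R] (Fin (rN (k - 1)) → R))
      (φ : ∀ k : ℤ, (Fin (rM k) → R) →ₗ[R] (Fin (rN k) → R)),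
      {k : ℤ | rM k ≠ 0}.Finite ∧ {k : ℤ | rN k ≠ 0}.Finite ∧
      FreeComplexAcyclic R rM dM ∧ FreeComplexAcyclic R rN dN ∧
      (∀ k, (dN k).comp (φ k) = (φ (k - 1)).comp (dM k)) ∧
      (∀ k, Function.Surjective (φ k)) ∧
      ¬ (∃ (rK : ℤ → ℕ) (dK : ∀ k : ℤ, (Fin (rK k) → R) →ₗ[R] (Fin (rK (k - 1)) → R))
          (ι : ∀ k : ℤ, (Fin (rK k) → R) →ₗ[R] (Fin (rM k) → R)),
          FreeComplexAcyclic R rK dK ∧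
          (∀ k, (dM k).comp (ι k) = (ι (k - 1)).comp (dK k)) ∧
          (∀ k, Function.Injective (ι k)) ∧
          (∀ k, LinearMap.range (ι k) = LinearMap.ker (φ k))) ∧
      ∃ (rK : ℤ → ℕ) (dK : ∀ k : ℤ, (Fin (rK k) → R) →ₗ[R] (Fin (rK (k - 1)) → R))
        (ι : ∀ k : ℤ, (Fin (rK k) → R) →ₗ[R] (Fin (rM k) → R)),
        (∀ k, (dM k).comp (ι k) = (ι (k - 1)).comp (dK k)) ∧
        (∀ k, Function.Injective (ι k)) ∧
        (∀ k, LinearMap.range (ι k) = LinearMap.ker (φ k)) ∧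
        (∀ k, LinearMap.range (dK k) = LinearMap.ker (dK (k - 1))) ∧
        ¬ FreeComplexAcyclic R rK dK := by
  classical
  refine ⟨rm m n, rn m, dm e, dn R m, phi R m n, ?_, ?_, ?_, ?_, ?_, ?_, ?_, ?_⟩
  · -- finiteness of the support of rM
    apply Set.Finite.subset (Set.finite_Icc (0:ℤ) 3)
    intro k hk
    simp only [Set.mem_setOf_eq] at hk
    rw [Set.mem_Icc]
    by_contra hmem
    exact hk (rm_zero (by omega) (by omega) (by omega) (by omega))
  · -- finiteness of the support of rN
    apply Set.Finite.subset (Set.finite_Icc (1:ℤ) 2)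
    intro k hk
    simp only [Set.mem_setOf_eq] at hk
    rw [Set.mem_Icc]
    by_contra hmem
    exact hk (rn_zero (by omega) (by omega))
  · -- M is acyclic in Free(R)
    exact ⟨zm m n, iM e, pM e, iM_inj e, pM_surj e, range_iM e, dm_fact e⟩
  · -- N is acyclic in Free(R)
    exact ⟨zn m, iN R m, pN R m, iN_inj, pN_surj, range_iN, dn_fact⟩
  · exact chain_phi e
  · exact phi_surj
  · -- there is no acyclic kernel complex
    rintro ⟨rK', dK', ι', hacy, hcomm, hinj, hker⟩
    obtain ⟨z, ιz, pz, hzinj, hzsurj, hzrange, hzfact⟩ := hacy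
    apply hnotfree
    have h1 : LinearMap.range ((dm e 2).comp (ι' 2))
        = LinearMap.range ((ι' (2-1)).comp ((ιz (2-1)).comp (pz 2))) := by
      rw [hcomm 2, hzfact 2]
    have h2 : LinearMap.range ((ι' (2-1)).comp ((ιz (2-1)).comp (pz 2)))
        = LinearMap.range ((ι' (2-1)).comp (ιz (2-1))) := by
      rw [← LinearMap.comp_assoc]
      exact LinearMap.range_comp_of_range_eq_top _
        (LinearMap.range_eq_top.mpr (hzsurj 2))
    have h3 : LinearMap.range ((dm e 2).comp (ι' 2))
        = LinearMap.range ((dm e 2).comp (iKM R m n 2)) := by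
      rw [LinearMap.range_comp, LinearMap.range_comp, hker 2, range_iKM]
    have h4 : LinearMap.range ((dm e 2).comp (iKM R m n 2))
        = LinearMap.range ((iKM R m n (2-1)).comp ((jP e).comp (prP e))) := by
      rw [chain_iKM e 2]
      rw [show dk e 2 = (jP e).comp (prP e) from rfl]
      exact rfl
    have h5 : LinearMap.range ((iKM R m n (2-1)).comp ((jP e).comp (prP e)))
        = LinearMap.range ((iKM R m n (2-1)).comp (jP e)) := by
      show LinearMap.range (((iKM R m n (2-1)).comp (jP e)).comp (prP e)) = _
      exact LinearMap.range_comp_of_range_eq_top _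
        (LinearMap.range_eq_top.mpr (prP_surj e))
    have hfinj : Function.Injective ((iKM R m n (2-1)).comp (jP e)) := by
      rw [LinearMap.coe_comp]
      exact (iKM_inj (2-1)).comp (jP_inj e)
    have hginj : Function.Injective ((ι' (2-1)).comp (ιz (2-1))) := by
      rw [LinearMap.coe_comp]
      exact (hinj (2-1)).comp (hzinj (2-1))
    refine free_of_range_eq _ hfinj _ hginj ?_
    rw [← h5, ← h4, ← h3, h1, h2]
  · -- the termwise kernel complex: exact but not acyclic in Free(R)
    refine ⟨rk m n, dk e, iKM R m n, chain_iKM e, iKM_inj, range_iKM, dk_exact e, ?_⟩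
    rintro ⟨z, ιz, pz, hzinj, hzsurj, hzrange, hzfact⟩
    apply hnotfree
    have h1 : LinearMap.range (dk e 2) = LinearMap.range (ιz (2-1)) := by
      rw [hzfact 2]
      exact LinearMap.range_comp_of_range_eq_top _
        (LinearMap.range_eq_top.mpr (hzsurj 2))
    have h2 : LinearMap.range ((jP e).comp (prP e)) = LinearMap.range (jP e) :=
      LinearMap.range_comp_of_range_eq_top _
        (LinearMap.range_eq_top.mpr (prP_surj e))
    refine free_of_range_eq (jP e) (jP_inj e) (ιz (2-1)) (hzinj (2-1)) ?_
    exact h2.symm.trans h1
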